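/- Let G and H be graphs and let M_r(H,G) denote the minimum over all r-colourings of E(G) of the number of monochromatic copies of H. Then for every r-colouring of the edges of the blowup G[n], the number of monochromatic canonical copies of H in G[n] is at least M_r(H,G) · n^{v(H)}. -/

import Mathlib

open SimpleGraph Finset

variable {α β : Type*}

/-- `φ` is a copy (injective graph homomorphism) of `H` in `G`. -/
def IsCopy (H : SimpleGraph α) (G : SimpleGraph β) (φ : α → β) : Prop :=
  Function.Injective φ ∧ ∀ ⦃u v⦄, H.Adj u v → G.Adj (φ u) (φ v)

/-- The copy `φ` of `H` is monochromatic under the edge colouring `c`. -/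
def Mono (H : SimpleGraph α) (r : ℕ) (c : Sym2 β → Fin r) (φ : α → β) : Prop :=
  ∃ i : Fin r, ∀ ⦃u v⦄, H.Adj u v → c s(φ u, φ v) = i

/-- Number of monochromatic copies of `H` in `G` under colouring `c`. -/
noncomputable def monoCount (H : SimpleGraph α) (G : SimpleGraph β) (r : ℕ)
    (c : Sym2 β → Fin r) : ℕ :=
  Nat.card {φ : α → β // IsCopy H G φ ∧ Mono H r c φ}

/-- `M r H G`: the minimum number of monochromatic copies of `H`
over all `r`-colourings of `G`. -/
noncomputable def M (r : ℕ) (H : SimpleGraph α) (G : SimpleGraph β) : ℕ :=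
  sInf (Set.range (monoCount H G r))

/-- `G` is `r`-Ramsey for `H`. -/
def IsRamsey (r : ℕ) (H : SimpleGraph α) (G : SimpleGraph β) : Prop :=
  ∀ c : Sym2 β → Fin r, ∃ φ : α → β, IsCopy H G φ ∧ Mono H r c φ

/-- The `n`-blowup of `G`. -/
def blowup (G : SimpleGraph β) (n : ℕ) : SimpleGraph (β × Fin n) where
  Adj a b := G.Adj a.1 b.1
  symm := ⟨fun _ _ h => G.adj_symm h⟩
  loopless := ⟨fun a h => G.irrefl (v := a.1) h⟩

/-- There is a monochromatic canonical copy of the blowup `H[t]` (part sizes `t u`)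
in the `n`-blowup of `G` under the colouring `c`. -/
def MonoCanonBlowup (H : SimpleGraph α) (G : SimpleGraph β) (n r : ℕ)
    (t : α → ℕ) (c : Sym2 (β × Fin n) → Fin r) : Prop :=
  ∃ (φ : α → β) (S : α → Finset (Fin n)) (i : Fin r),
    IsCopy H G φ ∧ (∀ u, (S u).card = t u) ∧
    ∀ ⦃u v⦄, H.Adj u v → ∀ a ∈ S u, ∀ b ∈ S v, c s((φ u, a), (φ v, b)) = i

open scoped Classical in
noncomputable def fiberEquiv {n : ℕ} (φ : α → β) (hφ : Function.Injective φ) (f : α → Fin n) :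
    {g : β → Fin n // ∀ a, g (φ a) = f a} ≃ ({b : β // b ∉ Set.range φ} → Fin n) where
  toFun g x := g.1 x.1
  invFun h := ⟨fun b => if hb : b ∈ Set.range φ then f hb.choose else h ⟨b, hb⟩, by
    intro a
    dsimp only
    have hb : φ a ∈ Set.range φ := ⟨a, rfl⟩
    rw [dif_pos hb, hφ hb.choose_spec]⟩
  left_inv g := by
    ext b
    dsimp only
    by_cases hb : b ∈ Set.range φ
    · rw [dif_pos hb, ← g.2 hb.choose, hb.choose_spec]
    · rw [dif_neg hb]
  right_inv h := by
    ext x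
    dsimp only
    rw [dif_neg x.2]

lemma nat_card_sigma {ι : Type*} [Fintype ι] (f : ι → Type*) [∀ i, Fintype (f i)] :
    Nat.card (Σ i, f i) = ∑ i, Nat.card (f i) := by
  simp [Nat.card_eq_fintype_card, Fintype.card_sigma]

def cg {n r : ℕ} (c : Sym2 (β × Fin n) → Fin r) (g : β → Fin n) : Sym2 β → Fin r :=
  fun e => c (e.map fun u => (u, g u))

@[simp] lemma cg_pair {n r : ℕ} (c : Sym2 (β × Fin n) → Fin r) (g : β → Fin n) (u v : β) :
    cg c g s(u, v) = c s((u, g u), (v, g v)) := by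
  simp [cg, Sym2.map_pair_eq]

/-- every `r`-colouring of the blowup `G[n]` has at least
`M_r(H,G) · n^{v(H)}` monochromatic canonical copies of `H`. -/
theorem mono_canonical_copies_lower_bound [Fintype α] [Fintype β]
    (r : ℕ) (H : SimpleGraph α) (G : SimpleGraph β) (n : ℕ)
    (c : Sym2 (β × Fin n) → Fin r) :
    M r H G * n ^ Fintype.card α ≤
      Nat.card {p : (α → β) × (α → Fin n) // IsCopy H G p.1 ∧
        ∃ i : Fin r, ∀ ⦃u v⦄, H.Adj u v →
          c s((p.1 u, p.2 u), (p.1 v, p.2 v)) = i} := by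
  classical
  rcases Nat.eq_zero_or_pos (M r H G) with hM | hM
  · simp [hM]
  -- from M > 0, extract a copy and a colour
  have hone : ∃ (φ : α → β), Function.Injective φ ∧ Nonempty (Fin r) := by
    have h0 : sInf (Set.range (monoCount H G r)) ≠ 0 := hM.ne'
    have hne : (Set.range (monoCount H G r)).Nonempty := by
      by_contra h
      rw [Set.not_nonempty_iff_eq_empty] at h
      exact h0 (by rw [h, Nat.sInf_empty])
    obtain ⟨m, c₀, hc₀⟩ := hne
    have hmc : monoCount H G r c₀ ≠ 0 := by
      intro h
      have hle : M r H G ≤ monoCount H G r c₀ := Nat.sInf_le ⟨c₀, rfl⟩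
      rw [h, Nat.le_zero] at hle
      exact hM.ne' hle
    rw [monoCount, Nat.card_ne_zero] at hmc
    obtain ⟨⟨φ, hcopy, i, _⟩⟩ := hmc.1
    exact ⟨φ, hcopy.1, ⟨i⟩⟩
  obtain ⟨φ₀, hφ₀, hr⟩ := hone
  have hcard : Fintype.card α ≤ Fintype.card β := Fintype.card_le_of_injective φ₀ hφ₀
  by_cases hn : n = 0
  · subst hn
    by_cases hα : Nonempty α
    · have : 0 < Fintype.card α := Fintype.card_pos_iff.mpr hα
      rw [Nat.zero_pow this, Nat.mul_zero]
      exact Nat.zero_le _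
    · haveI : IsEmpty α := not_nonempty_iff.mp hα
      rw [Fintype.card_eq_zero, pow_zero, Nat.mul_one]
      have hM1 : M r H G ≤ 1 := by
        obtain ⟨i⟩ := hr
        refine le_trans (Nat.sInf_le ⟨fun _ => i, rfl⟩) ?_
        calc monoCount H G r (fun _ => i)
            = Fintype.card {φ : α → β // IsCopy H G φ ∧ Mono H r (fun _ => i) φ} :=
              Nat.card_eq_fintype_card
          _ ≤ Fintype.card (α → β) := Fintype.card_subtype_le _
          _ = 1 := by simp
      refine hM1.trans ?_
      have : Nonempty {p : (α → β) × (α → Fin 0) // IsCopy H G p.1 ∧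
          ∃ i : Fin r, ∀ ⦃u v⦄, H.Adj u v →
            c s((p.1 u, p.2 u), (p.1 v, p.2 v)) = i} := by
        obtain ⟨i⟩ := hr
        exact ⟨⟨(fun a => isEmptyElim a, fun a => isEmptyElim a),
          ⟨fun a => isEmptyElim a, fun u => isEmptyElim u⟩, i, fun u => isEmptyElim u⟩⟩
      exact Nat.one_le_iff_ne_zero.mpr (Nat.card_ne_zero.mpr ⟨this, inferInstance⟩)
  · -- main case : n > 0
    have hn' : 0 < n := Nat.pos_of_ne_zero hn
    set k := Fintype.card β - Fintype.card α with hk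
    set B := {p : (α → β) × (α → Fin n) // IsCopy H G p.1 ∧
        ∃ i : Fin r, ∀ ⦃u v⦄, H.Adj u v →
          c s((p.1 u, p.2 u), (p.1 v, p.2 v)) = i} with hB
    set A := {p : (β → Fin n) × (α → β) //
        IsCopy H G p.2 ∧ Mono H r (cg c p.1) p.2} with hA
    -- Step 1 : lower bound on |A|
    have step1 : M r H G * n ^ Fintype.card β ≤ Nat.card A := by
      have e1 : Nat.card A = ∑ g : β → Fin n,
          Nat.card {φ : α → β // IsCopy H G φ ∧ Mono H r (cg c g) φ} := by
        rw [Nat.card_congr (Equiv.subtypeProdEquivSigmaSubtype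
          (fun (g : β → Fin n) (φ : α → β) => IsCopy H G φ ∧ Mono H r (cg c g) φ))]
        exact nat_card_sigma _
      rw [e1]
      calc M r H G * n ^ Fintype.card β
          = ∑ _g : β → Fin n, M r H G := by
            rw [Finset.sum_const, Finset.card_univ, Fintype.card_fun,
              Fintype.card_fin, smul_eq_mul, Nat.mul_comm]
        _ ≤ _ := Finset.sum_le_sum fun g _ => Nat.sInf_le ⟨cg c g, rfl⟩
    -- Step 3 : A ≃ Σ p : B, fiber
    let Fib : B → Type _ := fun p => {g : β → Fin n // ∀ a, g (p.1.1 a) = p.1.2 a}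
    let E : A ≃ Σ p : B, Fib p :=
      { toFun := fun a => ⟨⟨(a.1.2, fun x => a.1.1 (a.1.2 x)), a.2.1, by
            obtain ⟨i, hi⟩ := a.2.2
            exact ⟨i, fun u v huv => by
              have := hi huv
              rwa [cg_pair] at this⟩⟩,
          ⟨a.1.1, fun _ => rfl⟩⟩
        invFun := fun q => ⟨(q.2.1, q.1.1.1), q.1.2.1, by
            obtain ⟨i, hi⟩ := q.1.2.2
            refine ⟨i, fun u v huv => ?_⟩
            rw [cg_pair]
            dsimp only
            rw [q.2.2 u, q.2.2 v]
            exact hi huv⟩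
        left_inv := fun a => rfl
        right_inv := fun q => by
          obtain ⟨⟨⟨φ, f⟩, hp⟩, ⟨g, hg⟩⟩ := q
          have hf : (fun x => g (φ x)) = f := funext hg
          subst hf
          rfl }
    have step3 : Nat.card A = Nat.card B * n ^ k := by
      rw [Nat.card_congr E, nat_card_sigma]
      have hfib : ∀ p : B, Nat.card (Fib p) = n ^ k := by
        intro p
        rw [Nat.card_congr (fiberEquiv p.1.1 p.2.1.1 p.1.2), Nat.card_fun]
        congr 1
        · simp [Nat.card_eq_fintype_card]
        · rw [Nat.card_eq_fintype_card, Fintype.card_subtype_compl, hk]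
          congr 1
          rw [← Fintype.card_congr (Equiv.ofInjective p.1.1 p.2.1.1)]
      rw [Finset.sum_congr rfl fun p _ => hfib p, Finset.sum_const, Finset.card_univ,
        smul_eq_mul, Nat.card_eq_fintype_card]
    -- conclude
    rw [step3] at step1
    have hpow : n ^ Fintype.card β = n ^ Fintype.card α * n ^ k := by
      rw [← pow_add, hk, Nat.add_sub_cancel' hcard]
    rw [hpow, ← Nat.mul_assoc] at step1
    exact Nat.le_of_mul_le_mul_right step1 (pow_pos hn' k)
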